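/- The matrix representation D of d/dx via trigonometric interpolation at distinct points x_0, ..., x_{2n} ∈ [0, L) has entries D_{mj} = (ψ_m/ψ_j)·(π/L)·(1/sin(π(x_m − x_j)/L)) for m ≠ j, and D_{jj} = (π/L) ∑_{k≠j} cot(π(x_j − x_k)/L), where ψ_m = ∏_{k≠m} sin(π(x_m − x_k)/L). That is, t_j'(x_m) equals these values. -/

import Mathlib

open Real Finset

/-- Entries of the matrix `D` representing `d/dx` via trigonometric interpolation:
`D_{mj} = t_j'(x_m)` is given by `(ψ_m/ψ_j)(π/L)/sin(π(x_m−x_j)/L)` for `m ≠ j` and by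
`(π/L) ∑_{k≠j} cot(π(x_j−x_k)/L)` for `m = j`. -/
theorem derivative_matrix_entries (L : ℝ) (hL : 0 < L) (n : ℕ)
    (x : Fin (2 * n + 1) → ℝ)
    (hmem : ∀ i, x i ∈ Set.Ico (0 : ℝ) L) (hinj : Function.Injective x)
    (ψ : Fin (2 * n + 1) → ℝ)
    (hψ : ∀ m, ψ m = ∏ k ∈ Finset.univ.erase m, Real.sin (π * (x m - x k) / L))
    (t : Fin (2 * n + 1) → ℝ → ℝ)
    (ht : ∀ j y, t j y =
      (∏ k ∈ Finset.univ.erase j, Real.sin (π * (y - x k) / L)) / ψ j) :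
    (∀ m j, m ≠ j → deriv (t j) (x m) =
      (ψ m / ψ j) * (π / L) * (1 / Real.sin (π * (x m - x j) / L))) ∧
    (∀ j, deriv (t j) (x j) =
      (π / L) * ∑ k ∈ Finset.univ.erase j,
        Real.cos (π * (x j - x k) / L) / Real.sin (π * (x j - x k) / L)) := by
  -- sines at distinct nodes are nonzero
  have hsin : ∀ i k : Fin (2 * n + 1), i ≠ k → Real.sin (π * (x i - x k) / L) ≠ 0 := by
    intro i k hik
    have h1 : x i - x k ≠ 0 := sub_ne_zero.2 fun h => hik (hinj h)
    have h2 : -L < x i - x k := by have := (hmem i).1; have := (hmem k).2; linarith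
    have h3 : x i - x k < L := by have := (hmem i).2; have := (hmem k).1; linarith
    have hlt : π * (x i - x k) / L < π := by
      rw [div_lt_iff₀ hL]
      have := mul_lt_mul_of_pos_left h3 Real.pi_pos
      linarith
    have hgt : -π < π * (x i - x k) / L := by
      rw [lt_div_iff₀ hL]
      have := mul_lt_mul_of_pos_left h2 Real.pi_pos
      linarith
    intro h
    rw [Real.sin_eq_zero_iff_of_lt_of_lt hgt hlt] at h
    have hπ : π ≠ 0 := Real.pi_ne_zero
    have := (div_eq_zero_iff.1 h).resolve_right (ne_of_gt hL)
    rcases mul_eq_zero.1 this with h' | h'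
    · exact hπ h'
    · exact h1 h'
  have hψne : ∀ m, ψ m ≠ 0 := by
    intro m
    rw [hψ m]
    exact Finset.prod_ne_zero_iff.2 fun k hk => hsin m k (Finset.ne_of_mem_erase hk).symm
  -- the derivative of t j at any point y
  have key : ∀ (j : Fin (2 * n + 1)) (y : ℝ), HasDerivAt (t j)
      ((∑ i ∈ Finset.univ.erase j,
        (∏ k ∈ (Finset.univ.erase j).erase i, Real.sin (π * (y - x k) / L)) *
          (Real.cos (π * (y - x i) / L) * (π / L))) / ψ j) y := by
    intro j y
    have hteq : t j = fun y => (∏ k ∈ Finset.univ.erase j,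
        Real.sin (π * (y - x k) / L)) / ψ j := funext (ht j)
    rw [hteq]
    have hprod : HasDerivAt (fun y => ∏ k ∈ Finset.univ.erase j,
        Real.sin (π * (y - x k) / L))
        (∑ i ∈ Finset.univ.erase j,
          (∏ k ∈ (Finset.univ.erase j).erase i, Real.sin (π * (y - x k) / L)) *
            (Real.cos (π * (y - x i) / L) * (π / L))) y := by
      have := HasDerivAt.fun_finsetProd (u := Finset.univ.erase j)
        (f := fun k y => Real.sin (π * (y - x k) / L))
        (f' := fun k => Real.cos (π * (y - x k) / L) * (π / L)) (x := y) ?_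
      · simpa [smul_eq_mul] using this
      · intro i _
        have h1 : HasDerivAt (fun y : ℝ => π * (y - x i) / L) (π / L) y := by
          simpa using (((hasDerivAt_id y).sub_const (x i)).const_mul π).div_const L
        exact (Real.hasDerivAt_sin _).comp y h1
    exact hprod.div_const (ψ j)
  constructor
  · intro m j hmj
    have hd := (key j (x m)).deriv
    rw [hd]
    have hm : m ∈ Finset.univ.erase j := Finset.mem_erase.2 ⟨hmj, Finset.mem_univ m⟩
    rw [Finset.sum_eq_single m (fun i hi hine => by
        have hmne : m ∈ ((Finset.univ.erase j).erase i) :=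
          Finset.mem_erase.2 ⟨hine.symm, hm⟩
        rw [Finset.prod_eq_zero hmne (by simp), zero_mul]) (fun h => absurd hm h)]
    have hcos : Real.cos (π * (x m - x m) / L) = 1 := by simp
    rw [hcos, one_mul]
    have herase : (Finset.univ.erase j).erase m = (Finset.univ.erase m).erase j :=
      Finset.erase_right_comm
    have hψm : ψ m = Real.sin (π * (x m - x j) / L) *
        ∏ k ∈ (Finset.univ.erase m).erase j, Real.sin (π * (x m - x k) / L) := by
      rw [hψ m]
      exact (Finset.mul_prod_erase _ (fun k => Real.sin (π * (x m - x k) / L))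
        (Finset.mem_erase.2 ⟨hmj.symm, Finset.mem_univ j⟩)).symm
    rw [herase]
    have hs := hsin m j hmj
    have hψj := hψne j
    rw [hψm]
    field_simp
  · intro j
    have hd := (key j (x j)).deriv
    rw [hd, div_eq_iff (hψne j)]
    rw [Finset.mul_sum, Finset.sum_mul]
    refine Finset.sum_congr rfl fun i hi => ?_
    have hji : j ≠ i := (Finset.ne_of_mem_erase hi).symm
    have hψj : ψ j = Real.sin (π * (x j - x i) / L) *
        ∏ k ∈ (Finset.univ.erase j).erase i, Real.sin (π * (x j - x k) / L) := by
      rw [hψ j]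
      exact (Finset.mul_prod_erase _ (fun k => Real.sin (π * (x j - x k) / L)) hi).symm
    rw [hψj]
    have hs := hsin j i hji
    field_simp
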